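/- Let G be a finite simple graph with n vertices and m edges. The F-coindex of the edge-semitotal graph satisfies F̄(T₂(G)) = (m+n-2)·F(G) + (m+n-1)·M₁(G) + 2(m+n-1)·M₂(G) - ξ₄(G) - 3·ReZG₃(G). -/

import Mathlib

open SimpleGraph Finset
open scoped Classical

noncomputable section
namespace Paper

variable {V : Type*} [Fintype V]

/-- Degree as an integer. -/
def d (G : SimpleGraph V) (v : V) : ℤ := G.degree v

/-- Number of edges. -/
def m (G : SimpleGraph V) : ℤ := G.edgeFinset.card

/-- Sum over unordered edges of a symmetric vertex-pair function. -/
def edgeSum (G : SimpleGraph V) (f : V → V → ℤ) (hf : ∀ u v, f u v = f v u) : ℤ :=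
  ∑ e ∈ G.edgeFinset, Sym2.lift ⟨f, hf⟩ e

/-- First Zagreb index. -/
def M1 (G : SimpleGraph V) : ℤ := ∑ v, d G v ^ 2

/-- Second Zagreb index. -/
def M2 (G : SimpleGraph V) : ℤ :=
  edgeSum G (fun u v => d G u * d G v) (by intros; ring)

/-- F-index. -/
def F (G : SimpleGraph V) : ℤ := ∑ v, d G v ^ 3

/-- ξ₄. -/
def xi4 (G : SimpleGraph V) : ℤ := ∑ v, d G v ^ 4

/-- Redefined third Zagreb index. -/
def ReZG3 (G : SimpleGraph V) : ℤ :=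
  edgeSum G (fun u v => d G u * d G v * (d G u + d G v)) (by intros; ring)

/-- F-coindex: sum over edges of the complement with degrees in G. -/
def Fbar (G : SimpleGraph V) : ℤ :=
  edgeSum Gᶜ (fun u v => d G u ^ 2 + d G v ^ 2) (by intros; ring)

/-- Subdivision graph. -/
def subdivision (G : SimpleGraph V) : SimpleGraph (V ⊕ G.edgeSet) where
  Adj x y :=
    match x, y with
    | Sum.inl u, Sum.inr e => u ∈ (e : Sym2 V)
    | Sum.inr e, Sum.inl u => u ∈ (e : Sym2 V)
    | _, _ => False
  symm := by constructor; rintro (u | e) (v | f) h <;> first | exact h | exact h.elim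
  loopless := by constructor; rintro (u | e) <;> simp

/-- Vertex-semitotal graph. -/
def vertexSemitotal (G : SimpleGraph V) : SimpleGraph (V ⊕ G.edgeSet) where
  Adj x y :=
    match x, y with
    | Sum.inl u, Sum.inl v => G.Adj u v
    | Sum.inl u, Sum.inr e => u ∈ (e : Sym2 V)
    | Sum.inr e, Sum.inl u => u ∈ (e : Sym2 V)
    | _, _ => False
  symm := by
    constructor
    rintro (u | e) (v | f) h
    · exact G.adj_symm h
    · exact h
    · exact h
    · exact h.elim
  loopless := by
    constructor
    rintro (u | e) h
    · exact G.loopless.irrefl u h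
    · exact h

/-- Edge-semitotal graph. -/
def edgeSemitotal (G : SimpleGraph V) : SimpleGraph (V ⊕ G.edgeSet) where
  Adj x y :=
    match x, y with
    | Sum.inl u, Sum.inr e => u ∈ (e : Sym2 V)
    | Sum.inr e, Sum.inl u => u ∈ (e : Sym2 V)
    | Sum.inr e, Sum.inr f => e ≠ f ∧ ∃ v, v ∈ (e : Sym2 V) ∧ v ∈ (f : Sym2 V)
    | _, _ => False
  symm := by
    constructor
    rintro (u | e) (v | f) h
    · exact h.elim
    · exact h
    · exact h
    · obtain ⟨hne, w, h1, h2⟩ := h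
      exact ⟨hne.symm, w, h2, h1⟩
  loopless := by
    constructor
    rintro (u | e) h
    · exact h
    · exact h.1 rfl

/-- Total graph. -/
def total (G : SimpleGraph V) : SimpleGraph (V ⊕ G.edgeSet) where
  Adj x y :=
    match x, y with
    | Sum.inl u, Sum.inl v => G.Adj u v
    | Sum.inl u, Sum.inr e => u ∈ (e : Sym2 V)
    | Sum.inr e, Sum.inl u => u ∈ (e : Sym2 V)
    | Sum.inr e, Sum.inr f => e ≠ f ∧ ∃ v, v ∈ (e : Sym2 V) ∧ v ∈ (f : Sym2 V)
  symm := by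
    constructor
    rintro (u | e) (v | f) h
    · exact G.adj_symm h
    · exact h
    · exact h
    · obtain ⟨hne, w, h1, h2⟩ := h
      exact ⟨hne.symm, w, h2, h1⟩
  loopless := by
    constructor
    rintro (u | e) h
    · exact G.loopless.irrefl u h
    · exact h.1 rfl

/-- Paraline graph: line graph of the subdivision graph. -/
def paraline (G : SimpleGraph V) : SimpleGraph (subdivision G).edgeSet :=
  (subdivision G).lineGraph



section Aux
variable {W : Type*} [Fintype W]

/-- Sum over adjacent ordered pairs equals twice the edge sum. -/
lemma two_mul_edgeSum (H : SimpleGraph W) (f : W → W → ℤ) (hf : ∀ u v, f u v = f v u) :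
    2 * edgeSum H f hf = ∑ p ∈ ({p : W × W | H.Adj p.1 p.2} : Finset _), f p.1 p.2 := by
  classical
  have hmap : ∀ p ∈ ({p : W × W | H.Adj p.1 p.2} : Finset (W × W)),
      Sym2.mk p.1 p.2 ∈ H.edgeFinset := by
    intro p hp
    simp only [Finset.mem_filter] at hp
    simpa [SimpleGraph.mem_edgeFinset] using hp.2
  have key := Finset.sum_fiberwise_of_maps_to hmap (fun p => f p.1 p.2)
  rw [← key, edgeSum, Finset.mul_sum]
  apply Finset.sum_congr rfl
  intro e he
  rw [SimpleGraph.mem_edgeFinset] at he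
  induction e with
  | h a b =>
    have hab : H.Adj a b := he
    have hfib : ({p : W × W | H.Adj p.1 p.2} : Finset _).filter (fun p => Sym2.mk p.1 p.2 = s(a, b))
        = {(a, b), (b, a)} := by
      ext p
      obtain ⟨x, y⟩ := p
      simp only [Finset.mem_filter, Finset.mem_univ, true_and, Finset.mem_insert,
        Finset.mem_singleton, Sym2.eq_iff, Prod.mk.injEq]
      constructor
      · rintro ⟨-, (⟨rfl, rfl⟩ | ⟨rfl, rfl⟩)⟩
        · left; exact ⟨rfl, rfl⟩
        · right; exact ⟨rfl, rfl⟩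
      · rintro (⟨rfl, rfl⟩ | ⟨rfl, rfl⟩)
        · exact ⟨hab, Or.inl ⟨rfl, rfl⟩⟩
        · exact ⟨hab.symm, Or.inr ⟨rfl, rfl⟩⟩
    rw [hfib, Sym2.lift_mk]
    rw [Finset.sum_pair (by simp [Prod.ext_iff, hab.ne] : ((a,b) : W × W) ≠ (b,a))]
    simp only []
    rw [hf b a]
    ring

lemma pairSum_swap (H : SimpleGraph W) (f : W → W → ℤ) :
    ∑ p ∈ ({p : W × W | H.Adj p.1 p.2} : Finset _), f p.1 p.2
      = ∑ p ∈ ({p : W × W | H.Adj p.1 p.2} : Finset _), f p.2 p.1 := by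
  classical
  apply Finset.sum_nbij' (fun p => Prod.swap p) (fun p => Prod.swap p) <;>
    simp [SimpleGraph.adj_comm]

/-- edge sum of a "sum of endpoint values" function. -/
lemma edgeSum_endpoints (H : SimpleGraph W) (g : W → W → ℤ) (hg : ∀ u v, g u v = g v u)
    (f : W → ℤ) (h : ∀ u v, g u v = f u + f v) :
    edgeSum H g hg = ∑ v, d H v * f v := by
  classical
  have h2 := two_mul_edgeSum H g hg
  have split : ∑ p ∈ ({p : W × W | H.Adj p.1 p.2} : Finset _), g p.1 p.2
      = (∑ p ∈ ({p : W × W | H.Adj p.1 p.2} : Finset _), f p.1)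
        + ∑ p ∈ ({p : W × W | H.Adj p.1 p.2} : Finset _), f p.2 := by
    rw [← Finset.sum_add_distrib]
    exact Finset.sum_congr rfl fun p _ => h p.1 p.2
  have swap : ∑ p ∈ ({p : W × W | H.Adj p.1 p.2} : Finset _), f p.2
      = ∑ p ∈ ({p : W × W | H.Adj p.1 p.2} : Finset _), f p.1 :=
    (pairSum_swap H (fun u _ => f u)).symm
  have sum1 : ∑ p ∈ ({p : W × W | H.Adj p.1 p.2} : Finset _), f p.1
      = ∑ v, d H v * f v := by
    rw [Finset.sum_filter, Fintype.sum_prod_type]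
    apply Finset.sum_congr rfl
    intro v _
    rw [d, SimpleGraph.degree, SimpleGraph.neighborFinset_eq_filter, Finset.card_filter,
      Nat.cast_sum, Finset.sum_mul]
    apply Finset.sum_congr rfl
    intro w _
    split_ifs <;> simp
  have : 2 * edgeSum H g hg = 2 * ∑ v, d H v * f v := by
    rw [h2, split, swap, sum1]; ring
  exact mul_left_cancel₀ (by norm_num : (2:ℤ) ≠ 0) this

lemma Fbar_eq (H : SimpleGraph W) :
    Fbar H = ∑ v, ((Fintype.card W : ℤ) - 1 - d H v) * d H v ^ 2 := by
  classical
  rw [Fbar, edgeSum_endpoints Hᶜ _ _ (fun v => d H v ^ 2) (fun u v => rfl)]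
  apply Finset.sum_congr rfl
  intro v _
  have h2 : H.degree v < Fintype.card W := H.degree_lt_card_verts v
  simp only [d]
  rw [SimpleGraph.degree_compl, Nat.sub_sub, Nat.cast_sub (by omega)]
  push_cast
  ring

end Aux

section Degrees
variable {V : Type*} [Fintype V]

lemma degree_filter {W : Type*} [Fintype W] (H : SimpleGraph W) (x : W) :
    H.degree x = ∑ y, if H.Adj x y then 1 else 0 := by
  classical
  rw [SimpleGraph.degree, SimpleGraph.neighborFinset_eq_filter, Finset.card_filter]

lemma incid_sum (G : SimpleGraph V) (u : V) :
    ∑ (f : G.edgeSet), (if u ∈ (f : Sym2 V) then 1 else 0 : ℕ) = G.degree u := by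
  classical
  rw [Finset.sum_set_coe (f := fun e => if u ∈ e then 1 else 0), ← Finset.card_filter]
  have heq : G.edgeSet.toFinset.filter (fun e => u ∈ e) = G.incidenceFinset u := by
    rw [SimpleGraph.incidenceFinset_eq_filter]
    ext e; simp
  rw [heq]
  exact G.card_incidenceFinset_eq_degree u

lemma est_degree_inl (G : SimpleGraph V) (u : V) :
    (edgeSemitotal G).degree (Sum.inl u) = G.degree u := by
  classical
  rw [degree_filter, Fintype.sum_sum_type]
  have h1 : ∑ (w : V), (if (edgeSemitotal G).Adj (Sum.inl u) (Sum.inl w) then 1 else 0 : ℕ)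
      = 0 := by
    simp [edgeSemitotal]
  have h2 : ∀ f : G.edgeSet,
      ((if (edgeSemitotal G).Adj (Sum.inl u) (Sum.inr f) then 1 else 0 : ℕ)
        = if u ∈ (f : Sym2 V) then 1 else 0) := by
    intro f; simp [edgeSemitotal]; congr
  rw [h1, Finset.sum_congr rfl (fun f _ => h2 f), incid_sum]
  omega

lemma est_degree_inr (G : SimpleGraph V) {u v : V} (h : G.Adj u v) :
    (edgeSemitotal G).degree (Sum.inr ⟨s(u,v), h⟩) = G.degree u + G.degree v := by
  classical
  have huv : u ≠ v := h.ne
  rw [degree_filter, Fintype.sum_sum_type]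
  set e : G.edgeSet := ⟨s(u,v), h⟩ with he
  -- first sum : vertices
  have h1 : ∑ (w : V), (if (edgeSemitotal G).Adj (Sum.inr e) (Sum.inl w) then 1 else 0 : ℕ)
      = 2 := by
    have : ∀ w : V, ((if (edgeSemitotal G).Adj (Sum.inr e) (Sum.inl w) then 1 else 0 : ℕ)
        = (if w = u then 1 else 0) + (if w = v then 1 else 0)) := by
      intro w
      have : (edgeSemitotal G).Adj (Sum.inr e) (Sum.inl w) ↔ (w = u ∨ w = v) := by
        simp [edgeSemitotal, he, Sym2.mem_iff]
      rw [if_congr this rfl rfl]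
      by_cases hwu : w = u <;> by_cases hwv : w = v <;> simp_all
    rw [Finset.sum_congr rfl (fun w _ => this w), Finset.sum_add_distrib]
    simp [Finset.sum_ite_eq' Finset.univ]
  -- second sum : edges
  have key : ∀ f : G.edgeSet,
      ((if (edgeSemitotal G).Adj (Sum.inr e) (Sum.inr f) then 1 else 0 : ℕ)
        + (if (f : Sym2 V) = s(u,v) then 1 else 0)
        + (if (f : Sym2 V) = s(u,v) then 1 else 0)
      = (if u ∈ (f : Sym2 V) then 1 else 0) + (if v ∈ (f : Sym2 V) then 1 else 0)) := by
    intro f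
    have hadj : (edgeSemitotal G).Adj (Sum.inr e) (Sum.inr f)
        ↔ (e ≠ f ∧ (u ∈ (f : Sym2 V) ∨ v ∈ (f : Sym2 V))) := by
      simp only [edgeSemitotal, he]
      constructor
      · rintro ⟨hne, w, hw1, hw2⟩
        refine ⟨hne, ?_⟩
        rw [Sym2.mem_iff] at hw1
        rcases hw1 with rfl | rfl
        · exact Or.inl hw2
        · exact Or.inr hw2
      · rintro ⟨hne, hw | hw⟩
        · exact ⟨hne, u, by simp, hw⟩
        · exact ⟨hne, v, by simp, hw⟩
    rw [if_congr hadj rfl rfl]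
    by_cases hfe : (f : Sym2 V) = s(u,v)
    · have : e = f := Subtype.ext hfe.symm
      simp [this, hfe, Sym2.mem_iff]
    · have hne : e ≠ f := fun hh => hfe (by rw [← hh])
      have hnotboth : ¬ (u ∈ (f : Sym2 V) ∧ v ∈ (f : Sym2 V)) := by
        intro hb
        exact hfe ((Sym2.mem_and_mem_iff huv).mp hb)
      by_cases hu : u ∈ (f : Sym2 V) <;> by_cases hv : v ∈ (f : Sym2 V) <;>
        simp_all
  have h2 := Finset.sum_congr rfl (fun f (_ : f ∈ (Finset.univ : Finset G.edgeSet)) => key f)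
  rw [Finset.sum_add_distrib, Finset.sum_add_distrib, Finset.sum_add_distrib] at h2
  have hone : ∑ (f : G.edgeSet), (if (f : Sym2 V) = s(u,v) then 1 else 0 : ℕ) = 1 := by
    have : ∀ f : G.edgeSet, ((if (f : Sym2 V) = s(u,v) then 1 else 0 : ℕ)
        = if f = e then 1 else 0) := by
      intro f
      have : (f : Sym2 V) = s(u,v) ↔ f = e := by
        rw [he]; exact ⟨fun hh => Subtype.ext hh, fun hh => by rw [hh]⟩
      rw [if_congr this rfl rfl]
    rw [Finset.sum_congr rfl (fun f _ => this f), Finset.sum_ite_eq' Finset.univ]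
    simp
  rw [hone, incid_sum, incid_sum] at h2
  omega

end Degrees

section Main
variable {V : Type*} [Fintype V]

lemma d_inl (G : SimpleGraph V) (u : V) :
    d (edgeSemitotal G) (Sum.inl u) = d G u := by
  simp only [d]
  rw [est_degree_inl]

lemma d_inr (G : SimpleGraph V) (e : G.edgeSet) :
    d (edgeSemitotal G) (Sum.inr e)
      = Sym2.lift ⟨fun u v => d G u + d G v, by intros; ring⟩ (e : Sym2 V) := by
  obtain ⟨e', he'⟩ := e
  induction e' with
  | h a b =>
    have hab : G.Adj a b := he'
    simp only [d]
    rw [est_degree_inr G hab, Sym2.lift_mk]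
    push_cast
    ring

lemma edgeSum_F (G : SimpleGraph V) :
    edgeSum G (fun u v => d G u ^ 2 + d G v ^ 2) (by intros; ring) = F G := by
  rw [edgeSum_endpoints G _ _ (fun v => d G v ^ 2) (fun u v => rfl), F]
  exact Finset.sum_congr rfl fun v _ => by ring

lemma edgeSum_xi4 (G : SimpleGraph V) :
    edgeSum G (fun u v => d G u ^ 3 + d G v ^ 3) (by intros; ring) = xi4 G := by
  rw [edgeSum_endpoints G _ _ (fun v => d G v ^ 3) (fun u v => rfl), xi4]
  exact Finset.sum_congr rfl fun v _ => by ring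

end Main

theorem stmt13 {V : Type*} [Fintype V] (G : SimpleGraph V) :
    Fbar (edgeSemitotal G) =
      (m G + (Fintype.card V : ℤ) - 2) * F G + (m G + (Fintype.card V : ℤ) - 1) * M1 G +
        2 * (m G + (Fintype.card V : ℤ) - 1) * M2 G - xi4 G - 3 * ReZG3 G := by
  classical
  have hcard : (Fintype.card (V ⊕ G.edgeSet) : ℤ) = (Fintype.card V : ℤ) + m G := by
    rw [Fintype.card_sum, m, SimpleGraph.edgeFinset_card]
    push_cast
    ring
  rw [Fbar_eq (edgeSemitotal G), hcard, Fintype.sum_sum_type]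
  have hV : ∑ u : V, ((Fintype.card V : ℤ) + m G - 1 - d (edgeSemitotal G) (Sum.inl u))
        * d (edgeSemitotal G) (Sum.inl u) ^ 2
      = ((Fintype.card V : ℤ) + m G - 1) * M1 G - F G := by
    rw [M1, F, Finset.mul_sum, ← Finset.sum_sub_distrib]
    apply Finset.sum_congr rfl
    intro u _
    rw [d_inl]
    ring
  have hE : ∑ e : G.edgeSet, ((Fintype.card V : ℤ) + m G - 1 - d (edgeSemitotal G) (Sum.inr e))
        * d (edgeSemitotal G) (Sum.inr e) ^ 2
      = ((Fintype.card V : ℤ) + m G - 1) * F G + 2 * ((Fintype.card V : ℤ) + m G - 1) * M2 G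
        - xi4 G - 3 * ReZG3 G := by
    have step1 : ∀ e : G.edgeSet,
        ((Fintype.card V : ℤ) + m G - 1 - d (edgeSemitotal G) (Sum.inr e))
            * d (edgeSemitotal G) (Sum.inr e) ^ 2
        = ((Fintype.card V : ℤ) + m G - 1)
              * Sym2.lift ⟨fun u v => d G u ^ 2 + d G v ^ 2, by intros; ring⟩ (e : Sym2 V)
          + 2 * ((Fintype.card V : ℤ) + m G - 1)
              * Sym2.lift ⟨fun u v => d G u * d G v, by intros; ring⟩ (e : Sym2 V)
          - Sym2.lift ⟨fun u v => d G u ^ 3 + d G v ^ 3, by intros; ring⟩ (e : Sym2 V)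
          - 3 * Sym2.lift ⟨fun u v => d G u * d G v * (d G u + d G v), by intros; ring⟩
              (e : Sym2 V) := by
      intro e
      rw [d_inr]
      obtain ⟨e', he'⟩ := e
      induction e' with
      | h a b =>
        simp only [Sym2.lift_mk]
        ring
    rw [Finset.sum_congr rfl (fun e _ => step1 e), Finset.sum_sub_distrib,
      Finset.sum_sub_distrib, Finset.sum_add_distrib, ← Finset.mul_sum, ← Finset.mul_sum,
      ← Finset.mul_sum]
    have c1 : (∑ e : G.edgeSet,
        Sym2.lift ⟨fun u v => d G u ^ 2 + d G v ^ 2, by intros; ring⟩ (e : Sym2 V)) = F G := by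
      rw [Finset.sum_set_coe]
      exact edgeSum_F G
    have c2 : (∑ e : G.edgeSet,
        Sym2.lift ⟨fun u v => d G u * d G v, by intros; ring⟩ (e : Sym2 V)) = M2 G := by
      rw [Finset.sum_set_coe]
      rfl
    have c3 : (∑ e : G.edgeSet,
        Sym2.lift ⟨fun u v => d G u ^ 3 + d G v ^ 3, by intros; ring⟩ (e : Sym2 V)) = xi4 G := by
      rw [Finset.sum_set_coe]
      exact edgeSum_xi4 G
    have c4 : (∑ e : G.edgeSet,
        Sym2.lift ⟨fun u v => d G u * d G v * (d G u + d G v), by intros; ring⟩ (e : Sym2 V))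
        = ReZG3 G := by
      rw [Finset.sum_set_coe]
      rfl
    rw [c1, c2, c3, c4]
  rw [hV, hE]
  ring

end Paper
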